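/- Let n ≥ 1, 1/2 ≤ α ≤ 1, and let θ : ℝ → ℝ^n satisfy |θ(t) − θ(t')| ≤ |t−t'|^α. Let X = ∪_k B_k be a union of lattice unit cubes in B_R^{n+1}(0) with centers (x_k, t_k), and let Y = ∪_l Q_l be the minimal union of lattice unit cubes containing ∪_k B₄^{n+1}(x_k + θ(t_k), t_k). Then for every 1 ≤ β ≤ n+1 there exists a constant c_n depending only on n such that φ_{Y,β} ≤ c_n φ_{X,β}, where in φ_{Y,β} the maximum is taken over all balls B_r^{n+1}(y₀,s₀) with r ≥ 1 (not necessarily contained in B_R^{n+1}(0)) and in φ_{X,β} over all balls B_r^{n+1} with r ≥ 1 containing the relevant cubes. -/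

import Mathlib

open MeasureTheory Metric RealInnerProductSpace
open scoped ENNReal NNReal

noncomputable def fourierT {n : ℕ} (f : EuclideanSpace ℝ (Fin n) → ℂ)
    (ξ : EuclideanSpace ℝ (Fin n)) : ℂ :=
  ∫ x : EuclideanSpace ℝ (Fin n),
    Complex.exp ((-(2 * Real.pi * ⟪x, ξ⟫) : ℝ) * Complex.I) * f x

noncomputable def extOp {n : ℕ} (g : EuclideanSpace ℝ (Fin n) → ℂ) (t : ℝ)
    (x : EuclideanSpace ℝ (Fin n)) : ℂ :=
  ∫ ξ : EuclideanSpace ℝ (Fin n),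
    Complex.exp (((2 * Real.pi * (⟪x, ξ⟫ + t * ‖ξ‖ ^ 2)) : ℝ) * Complex.I) * g ξ

noncomputable def schrod {n : ℕ} (f : EuclideanSpace ℝ (Fin n) → ℂ) (t : ℝ)
    (x : EuclideanSpace ℝ (Fin n)) : ℂ :=
  extOp (fourierT f) t x

noncomputable def sobolevNorm {n : ℕ} (s : ℝ) (f : EuclideanSpace ℝ (Fin n) → ℂ) : ℝ :=
  (∫ ξ : EuclideanSpace ℝ (Fin n), (1 + ‖ξ‖ ^ 2) ^ s * ‖fourierT f ξ‖ ^ 2) ^ (1/2 : ℝ)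

def ball2 {n : ℕ} (c : EuclideanSpace ℝ (Fin n) × ℝ) (r : ℝ) :
    Set (EuclideanSpace ℝ (Fin n) × ℝ) :=
  {p | Real.sqrt (‖p.1 - c.1‖ ^ 2 + (p.2 - c.2) ^ 2) < r}

def latticeCube {n : ℕ} (m : (Fin n → ℤ) × ℤ) : Set (EuclideanSpace ℝ (Fin n) × ℝ) :=
  {p | (∀ i, (m.1 i : ℝ) ≤ p.1 i ∧ p.1 i ≤ m.1 i + 1) ∧ ((m.2 : ℝ) ≤ p.2 ∧ p.2 ≤ m.2 + 1)}

noncomputable def cubeCenterX {n : ℕ} (m : (Fin n → ℤ) × ℤ) : EuclideanSpace ℝ (Fin n) :=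
  WithLp.toLp 2 (fun i => (m.1 i : ℝ) + 1/2)

noncomputable def cubeCenterT {n : ℕ} (m : (Fin n → ℤ) × ℤ) : ℝ := (m.2 : ℝ) + 1/2

noncomputable def latticeVec {n : ℕ} (m : Fin n → ℤ) : EuclideanSpace ℝ (Fin n) :=
  WithLp.toLp 2 (fun i => (m i : ℝ))


section Aux
variable {n : ℕ}

lemma auxCoordLe (x : EuclideanSpace ℝ (Fin n)) (i : Fin n) : |x i| ≤ ‖x‖ := by
  rw [EuclideanSpace.norm_eq, ← Real.sqrt_sq_eq_abs]
  apply Real.sqrt_le_sqrt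
  have := Finset.single_le_sum (f := fun j => ‖x j‖ ^ 2) (fun j _ => sq_nonneg _) (Finset.mem_univ i)
  simpa [Real.norm_eq_abs, sq_abs] using this

lemma auxNormLe (x : EuclideanSpace ℝ (Fin n)) (a : ℝ) (ha : 0 ≤ a)
    (h : ∀ i, |x i| ≤ a) : ‖x‖ ≤ Real.sqrt n * a := by
  rw [EuclideanSpace.norm_eq]
  have h1 : ∑ i, ‖x i‖ ^ 2 ≤ (n : ℝ) * a ^ 2 := by
    calc ∑ i, ‖x i‖ ^ 2 ≤ ∑ _i : Fin n, a ^ 2 := by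
          apply Finset.sum_le_sum; intro i _
          rw [Real.norm_eq_abs]
          exact pow_le_pow_left₀ (abs_nonneg _) (h i) 2
      _ = (n : ℝ) * a ^ 2 := by simp [Finset.sum_const, nsmul_eq_mul]
  calc Real.sqrt (∑ i, ‖x i‖ ^ 2) ≤ Real.sqrt ((n:ℝ) * a ^ 2) := Real.sqrt_le_sqrt h1
    _ = Real.sqrt n * a := by rw [Real.sqrt_mul (by positivity), Real.sqrt_sq ha]

lemma auxDnorm (p z : EuclideanSpace ℝ (Fin n) × ℝ) :
    ‖p.1 - z.1‖ ≤ Real.sqrt (‖p.1 - z.1‖ ^ 2 + (p.2 - z.2) ^ 2) :=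
  (Real.le_sqrt (by positivity) (by positivity)).2 (by nlinarith [sq_nonneg (p.2 - z.2)])

lemma auxDabs (p z : EuclideanSpace ℝ (Fin n) × ℝ) :
    |p.2 - z.2| ≤ Real.sqrt (‖p.1 - z.1‖ ^ 2 + (p.2 - z.2) ^ 2) :=
  (Real.le_sqrt (by positivity) (by positivity)).2
    (by nlinarith [sq_nonneg ‖p.1 - z.1‖, sq_abs (p.2 - z.2)])

lemma auxDle (p z : EuclideanSpace ℝ (Fin n) × ℝ) :
    Real.sqrt (‖p.1 - z.1‖ ^ 2 + (p.2 - z.2) ^ 2) ≤ ‖p.1 - z.1‖ + |p.2 - z.2| := by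
  have hab : (0:ℝ) ≤ ‖p.1 - z.1‖ + |p.2 - z.2| := by positivity
  have h : ‖p.1 - z.1‖ ^ 2 + (p.2 - z.2) ^ 2 ≤ (‖p.1 - z.1‖ + |p.2 - z.2|) ^ 2 := by
    nlinarith [sq_abs (p.2 - z.2), norm_nonneg (p.1 - z.1), abs_nonneg (p.2 - z.2)]
  exact (Real.sqrt_le_sqrt h).trans_eq (Real.sqrt_sq hab)

noncomputable def nearBox (z : EuclideanSpace ℝ (Fin n) × ℝ) : Finset ((Fin n → ℤ) × ℤ) :=
  (Finset.Icc (fun i => ⌈z.1 i⌉ - 5) (fun i => ⌈z.1 i⌉ + 4)) ×ˢ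
    Finset.Icc (⌈z.2⌉ - 5) (⌈z.2⌉ + 4)

lemma nearBox_card (z : EuclideanSpace ℝ (Fin n) × ℝ) : (nearBox z).card = 10 ^ (n + 1) := by
  have h : ∀ a : ℤ, (Finset.Icc (a - 5) (a + 4)).card = 10 := by
    intro a; rw [Int.card_Icc]; omega
  rw [nearBox, Finset.card_product, Pi.card_Icc]
  simp only [h]
  rw [Finset.prod_const, Finset.card_univ, Fintype.card_fin, pow_succ]

lemma mem_nearBox {q : (Fin n → ℤ) × ℤ} {p z : EuclideanSpace ℝ (Fin n) × ℝ}
    (hpq : p ∈ latticeCube q) (hpz : p ∈ ball2 z 4) : q ∈ nearBox z := by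
  have hD : Real.sqrt (‖p.1 - z.1‖ ^ 2 + (p.2 - z.2) ^ 2) < 4 := hpz
  have h1 : ‖p.1 - z.1‖ < 4 := (auxDnorm p z).trans_lt hD
  have h2 : |p.2 - z.2| < 4 := (auxDabs p z).trans_lt hD
  rw [nearBox, Finset.mem_product, Finset.mem_Icc, Finset.mem_Icc]
  refine ⟨⟨?_, ?_⟩, ?_, ?_⟩
  · intro i
    show ⌈z.1 i⌉ - 5 ≤ q.1 i
    have hc : |p.1 i - z.1 i| < 4 := lt_of_le_of_lt (auxCoordLe (p.1 - z.1) i) h1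
    have hcl := (hpq.1 i).1
    have hcu := (hpq.1 i).2
    have hceil : (⌈z.1 i⌉ : ℝ) < z.1 i + 1 := Int.ceil_lt_add_one _
    have : ((⌈z.1 i⌉ - 6 : ℤ) : ℝ) < (q.1 i : ℝ) := by
      have := abs_lt.1 hc; push_cast; linarith
    have := Int.cast_lt (R := ℝ) |>.1 this
    omega
  · intro i
    show q.1 i ≤ ⌈z.1 i⌉ + 4
    have hc : |p.1 i - z.1 i| < 4 := lt_of_le_of_lt (auxCoordLe (p.1 - z.1) i) h1
    have hcl := (hpq.1 i).1
    have hceil : z.1 i ≤ (⌈z.1 i⌉ : ℝ) := Int.le_ceil _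
    have : (q.1 i : ℝ) < ((⌈z.1 i⌉ + 4 : ℤ) : ℝ) := by
      have := abs_lt.1 hc; push_cast; linarith
    have := Int.cast_lt (R := ℝ) |>.1 this
    omega
  · have hcl := hpq.2.1
    have hcu := hpq.2.2
    have hceil : (⌈z.2⌉ : ℝ) < z.2 + 1 := Int.ceil_lt_add_one _
    have : ((⌈z.2⌉ - 6 : ℤ) : ℝ) < (q.2 : ℝ) := by
      have := abs_lt.1 h2; push_cast; linarith
    have := Int.cast_lt (R := ℝ) |>.1 this
    omega
  · have hcl := hpq.2.1
    have hceil : z.2 ≤ (⌈z.2⌉ : ℝ) := Int.le_ceil _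
    have : (q.2 : ℝ) < ((⌈z.2⌉ + 4 : ℤ) : ℝ) := by
      have := abs_lt.1 h2; push_cast; linarith
    have := Int.cast_lt (R := ℝ) |>.1 this
    omega

end Aux
set_option maxHeartbeats 2000000 in
theorem statement8 (n : ℕ) (hn : 1 ≤ n) :
    ∃ c : ℝ, 0 < c ∧ ∀ α : ℝ, 1/2 ≤ α → α ≤ 1 →
      ∀ θ : ℝ → EuclideanSpace ℝ (Fin n), (∀ t t' : ℝ, ‖θ t - θ t'‖ ≤ |t - t'| ^ α) →
      ∀ (R : ℝ) (S : Set ((Fin n → ℤ) × ℤ)), S.Finite →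
        (∀ m ∈ S, latticeCube m ⊆ ball2 (0, 0) R) →
      ∀ β : ℝ, 1 ≤ β → β ≤ n + 1 →
      ∀ φ : ℝ, 0 ≤ φ →
        (∀ (c' : EuclideanSpace ℝ (Fin n) × ℝ) (r : ℝ), 1 ≤ r →
          ({m ∈ S | latticeCube m ⊆ ball2 c' r}.ncard : ℝ) ≤ φ * r ^ β) →
        ∀ (c' : EuclideanSpace ℝ (Fin n) × ℝ) (r : ℝ), 1 ≤ r →
          ({q : (Fin n → ℤ) × ℤ |
              (latticeCube q ∩
                ⋃ m ∈ S, ball2 (cubeCenterX m + θ (cubeCenterT m), cubeCenterT m) 4).Nonempty ∧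
              latticeCube q ⊆ ball2 c' r}.ncard : ℝ) ≤ c * φ * r ^ β := by
  classical
  have hn0 : (0:ℝ) ≤ (n:ℝ) := Nat.cast_nonneg n
  refine ⟨10 ^ (n+1) * ((n:ℝ) + 16) ^ ((n:ℝ) + 1), by positivity, ?_⟩
  intro α hα1 hα2 θ hθ R S hSfin hSball β hβ1 hβ2 φ hφ0 hφ c' r hr
  set c'' : EuclideanSpace ℝ (Fin n) × ℝ := (c'.1 - θ c'.2, c'.2) with hc''
  set r' : ℝ := ((n:ℝ) + 16) * r with hrr
  have hr'1 : (1:ℝ) ≤ r' := by nlinarith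
  set S' : Finset ((Fin n → ℤ) × ℤ) :=
    hSfin.toFinset.filter (fun m => latticeCube m ⊆ ball2 c'' r') with hS'
  set F : Finset ((Fin n → ℤ) × ℤ) :=
    S'.biUnion (fun m => nearBox (cubeCenterX m + θ (cubeCenterT m), cubeCenterT m)) with hF
  have hsub : {q : (Fin n → ℤ) × ℤ |
      (latticeCube q ∩
        ⋃ m ∈ S, ball2 (cubeCenterX m + θ (cubeCenterT m), cubeCenterT m) 4).Nonempty ∧
      latticeCube q ⊆ ball2 c' r} ⊆ ↑F := by
    rintro q ⟨⟨p, hpq, hpU⟩, hq⟩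
    simp only [Set.mem_iUnion] at hpU
    obtain ⟨m, hmS, hpm⟩ := hpU
    refine Finset.mem_coe.2 (Finset.mem_biUnion.2 ⟨m, ?_, mem_nearBox hpq hpm⟩)
    refine Finset.mem_filter.2 ⟨hSfin.mem_toFinset.2 hmS, ?_⟩
    -- geometry: latticeCube m ⊆ ball2 c'' r'
    intro p' hp'
    set xm := cubeCenterX m with hxm
    set tm := cubeCenterT m with htm
    set w : EuclideanSpace ℝ (Fin n) := xm + θ tm with hw
    have hDm : Real.sqrt (‖p.1 - w‖ ^ 2 + (p.2 - tm) ^ 2) < 4 := hpm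
    have h1 : ‖p.1 - w‖ < 4 := (auxDnorm p (w, tm)).trans_lt hDm
    have h2 : |p.2 - tm| < 4 := (auxDabs p (w, tm)).trans_lt hDm
    have hqc : Real.sqrt (‖p.1 - c'.1‖ ^ 2 + (p.2 - c'.2) ^ 2) < r := hq hpq
    have h3 : ‖p.1 - c'.1‖ < r := (auxDnorm p c').trans_lt hqc
    have h4 : |p.2 - c'.2| < r := (auxDabs p c').trans_lt hqc
    have h5 : ‖p'.1 - xm‖ ≤ Real.sqrt n * (1/2) := by
      apply auxNormLe _ _ (by norm_num)
      intro i
      have h := hp'.1 i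
      rw [PiLp.sub_apply]
      show |p'.1 i - ((m.1 i : ℝ) + 1/2)| ≤ 1/2
      rw [abs_le]; constructor <;> linarith [h.1, h.2]
    have hsq : Real.sqrt n ≤ (n:ℝ) := by
      nlinarith [Real.sq_sqrt hn0, Real.sqrt_nonneg (n:ℝ),
        (by exact_mod_cast hn : (1:ℝ) ≤ (n:ℝ))]
    have h5' : ‖p'.1 - xm‖ ≤ (n:ℝ) := by nlinarith [norm_nonneg (p'.1 - xm)]
    have h6 : |p'.2 - tm| ≤ 1/2 := by
      have h := hp'.2
      show |p'.2 - ((m.2 : ℝ) + 1/2)| ≤ 1/2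
      rw [abs_le]; constructor <;> linarith [h.1, h.2]
    have h7 : |tm - c'.2| ≤ 5 * r := by
      have := abs_sub_le tm p.2 c'.2
      have := abs_sub_comm tm p.2
      linarith [abs_sub_le tm p.2 c'.2, (abs_sub_comm tm p.2).le, h2, h4]
    have h8 : ‖θ tm - θ c'.2‖ ≤ 5 * r := by
      refine (hθ tm c'.2).trans ?_
      calc |tm - c'.2| ^ α ≤ (5*r) ^ α :=
            Real.rpow_le_rpow (abs_nonneg _) h7 (by linarith)
        _ ≤ (5*r) ^ (1:ℝ) :=
            Real.rpow_le_rpow_of_exponent_le (by linarith) hα2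
        _ = 5*r := Real.rpow_one _
    have key : p'.1 - c''.1 = (p'.1 - xm) + (w - p.1) + (p.1 - c'.1) + (θ c'.2 - θ tm) := by
      simp only [hc'', hw]
      abel
    have h9 : ‖p'.1 - c''.1‖ < (n:ℝ) + 4 + r + 5*r := by
      rw [key]
      have t1 := norm_add_le ((p'.1 - xm) + (w - p.1) + (p.1 - c'.1)) (θ c'.2 - θ tm)
      have t2 := norm_add_le ((p'.1 - xm) + (w - p.1)) (p.1 - c'.1)
      have t3 := norm_add_le (p'.1 - xm) (w - p.1)
      have hwp : ‖w - p.1‖ < 4 := by rw [norm_sub_rev]; exact h1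
      have hsc : ‖θ c'.2 - θ tm‖ ≤ 5*r := by rw [norm_sub_rev]; exact h8
      linarith
    have h10 : |p'.2 - c''.2| < 1/2 + 4 + r := by
      have : |p'.2 - c'.2| ≤ |p'.2 - tm| + |tm - p.2| + |p.2 - c'.2| := by
        calc |p'.2 - c'.2| ≤ |p'.2 - p.2| + |p.2 - c'.2| := abs_sub_le _ _ _
          _ ≤ (|p'.2 - tm| + |tm - p.2|) + |p.2 - c'.2| := by
              linarith [abs_sub_le p'.2 tm p.2]
      have htp : |tm - p.2| < 4 := by rw [abs_sub_comm]; exact h2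
      show |p'.2 - c'.2| < 1/2 + 4 + r
      linarith
    show Real.sqrt (‖p'.1 - c''.1‖ ^ 2 + (p'.2 - c''.2) ^ 2) < r'
    calc Real.sqrt (‖p'.1 - c''.1‖ ^ 2 + (p'.2 - c''.2) ^ 2)
        ≤ ‖p'.1 - c''.1‖ + |p'.2 - c''.2| := auxDle p' c''
      _ < ((n:ℝ) + 4 + r + 5*r) + (1/2 + 4 + r) := by linarith
      _ ≤ r' := by rw [hrr]; nlinarith
  -- counting
  have hcard1 : ({q : (Fin n → ℤ) × ℤ |
      (latticeCube q ∩
        ⋃ m ∈ S, ball2 (cubeCenterX m + θ (cubeCenterT m), cubeCenterT m) 4).Nonempty ∧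
      latticeCube q ⊆ ball2 c' r}).ncard ≤ F.card := by
    simpa [Set.ncard_coe_finset] using Set.ncard_le_ncard hsub F.finite_toSet
  have hcard2 : F.card ≤ S'.card * 10 ^ (n+1) := by
    refine (Finset.card_biUnion_le).trans ?_
    rw [Finset.sum_congr rfl (fun m _ => nearBox_card _), Finset.sum_const, smul_eq_mul]
  have hS'card : (S'.card : ℝ) ≤ φ * r' ^ β := by
    have h := hφ c'' r' hr'1
    have hset : {m ∈ S | latticeCube m ⊆ ball2 c'' r'} = ↑S' := by
      ext m; simp [hS', hSfin.mem_toFinset]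
    rw [hset, Set.ncard_coe_finset] at h
    exact h
  have hsplit : r' ^ β = ((n:ℝ)+16) ^ β * r ^ β := Real.mul_rpow (by positivity) (by linarith)
  have hexp : ((n:ℝ)+16) ^ β ≤ ((n:ℝ)+16) ^ ((n:ℝ)+1) :=
    Real.rpow_le_rpow_of_exponent_le (by linarith) hβ2
  have hrβ : (0:ℝ) ≤ r ^ β := Real.rpow_nonneg (by linarith) β
  calc ({q : (Fin n → ℤ) × ℤ |
      (latticeCube q ∩
        ⋃ m ∈ S, ball2 (cubeCenterX m + θ (cubeCenterT m), cubeCenterT m) 4).Nonempty ∧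
      latticeCube q ⊆ ball2 c' r}.ncard : ℝ)
      ≤ ((S'.card * 10 ^ (n+1) : ℕ) : ℝ) := by
        exact_mod_cast hcard1.trans hcard2
    _ = (S'.card : ℝ) * 10 ^ (n+1) := by push_cast; ring
    _ ≤ (φ * r' ^ β) * 10 ^ (n+1) := by
        apply mul_le_mul_of_nonneg_right hS'card (by positivity)
    _ = (10:ℝ) ^ (n+1) * (((n:ℝ)+16) ^ β * (φ * r ^ β)) := by rw [hsplit]; ring
    _ ≤ (10:ℝ) ^ (n+1) * (((n:ℝ)+16) ^ ((n:ℝ)+1) * (φ * r ^ β)) := by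
        apply mul_le_mul_of_nonneg_left _ (by positivity)
        exact mul_le_mul_of_nonneg_right hexp (by positivity)
    _ = 10 ^ (n+1) * ((n:ℝ) + 16) ^ ((n:ℝ) + 1) * φ * r ^ β := by ring
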